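/- Let N ≥ 1 be an integer and q ∈ ℂ with 0 < |q| < 1, and let f(x) = −2 log q · [ ∑_{ℓ≥0} ( 2x²q^{2Nℓ}/(1−x²q^{2Nℓ}) − x²q^{2Nℓ+2}/(1−x²q^{2Nℓ+2}) − x²q^{2Nℓ−2}/(1−x²q^{2Nℓ−2}) ) − x²/(1−x²) + (1/2)·x²q²/(1−x²q²) + (1/2)·x²q^{−2}/(1−x²q^{−2}) − (the same expression with x replaced by x^{−1}) ]. Then for every x ∈ ℂ such that all the values f(q x), f(q² x), …, f(q^N x) are defined: ∑_{u=1}^{N} f(q^u x) = 0. -/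

import Mathlib

open Complex

/-- Half of the structure function: the expression in square brackets in `f(x)` depending on
`x` (the other half being obtained by `x ↦ x⁻¹`). -/
noncomputable def gHalf (N : ℕ) (q y : ℂ) : ℂ :=
  (∑' l : ℕ, (2 * y ^ 2 * q ^ (2 * (N : ℤ) * (l : ℤ)) / (1 - y ^ 2 * q ^ (2 * (N : ℤ) * (l : ℤ)))
      - y ^ 2 * q ^ (2 * (N : ℤ) * (l : ℤ) + 2) / (1 - y ^ 2 * q ^ (2 * (N : ℤ) * (l : ℤ) + 2))
      - y ^ 2 * q ^ (2 * (N : ℤ) * (l : ℤ) - 2) / (1 - y ^ 2 * q ^ (2 * (N : ℤ) * (l : ℤ) - 2))))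
    - y ^ 2 / (1 - y ^ 2)
    + (1 / 2) * (y ^ 2 * q ^ 2 / (1 - y ^ 2 * q ^ 2))
    + (1 / 2) * (y ^ 2 * q ^ (-2 : ℤ) / (1 - y ^ 2 * q ^ (-2 : ℤ)))

/-- inversion of the basic fraction -/
lemma frac_inv (z : ℂ) (h0 : z ≠ 0) (h1 : z ≠ 1) : z⁻¹ / (1 - z⁻¹) = -1 - z / (1 - z) := by
  have h2 : 1 - z ≠ 0 := sub_ne_zero.mpr fun h => h1 h.symm
  have h3 : 1 - z⁻¹ ≠ 0 := by
    rw [sub_ne_zero]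
    intro h
    exact h1 (by rw [← inv_inv z, ← h, inv_one])
  field_simp
  ring

lemma summable_aux (s a : ℂ) (hs : ‖s‖ < 1) :
    Summable (fun l : ℕ => a * s ^ l / (1 - a * s ^ l)) := by
  have h0 : Filter.Tendsto (fun l : ℕ => ‖a * s ^ l‖) Filter.atTop (nhds 0) := by
    have := (tendsto_pow_atTop_nhds_zero_of_norm_lt_one hs).const_mul a
    simpa using this.norm
  have hev : ∀ᶠ l in Filter.atTop, ‖a * s ^ l‖ ≤ 1/2 :=
    h0.eventually_le_const (by norm_num)
  refine Summable.of_norm_bounded_eventually (g := fun l => 2 * ‖a‖ * ‖s‖ ^ l)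
    (((summable_geometric_of_lt_one (norm_nonneg s) hs).mul_left (2 * ‖a‖))) ?_
  rw [Nat.cofinite_eq_atTop]
  filter_upwards [hev] with l hl
  have hden : (1:ℝ)/2 ≤ ‖1 - a * s ^ l‖ := by
    have h1 := norm_sub_norm_le (1:ℂ) (a * s ^ l)
    simp only [norm_one] at h1
    linarith
  calc ‖a * s ^ l / (1 - a * s ^ l)‖ = ‖a * s ^ l‖ / ‖1 - a * s ^ l‖ := norm_div _ _
    _ ≤ ‖a * s ^ l‖ / (1/2) := by gcongr
    _ = 2 * ‖a * s ^ l‖ := by ring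
    _ ≤ 2 * ‖a‖ * ‖s‖ ^ l := by rw [norm_mul, norm_pow]; ring_nf; exact le_refl _

/-- The basic fraction appearing in `gHalf`. -/
noncomputable def Ff (q x : ℂ) (k : ℤ) : ℂ := x ^ 2 * q ^ (2 * k) / (1 - x ^ 2 * q ^ (2 * k))

/-- Discrete derivative of `Ff`. -/
noncomputable def Df (q x : ℂ) (k : ℤ) : ℂ := Ff q x k - Ff q x (k + 1)

lemma pow_split (q : ℂ) (hq : q ≠ 0) (c d : ℤ) (l : ℕ) :
    q ^ (c + d * l) = q ^ c * (q ^ d) ^ l := by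
  rw [zpow_add₀ hq, zpow_mul, zpow_natCast]

lemma norm_qN_lt (q : ℂ) (hq1 : ‖q‖ < 1) (N : ℕ) (hN : 1 ≤ N) :
    ‖q ^ (2 * (N : ℤ))‖ < 1 := by
  rw [show (2 * (N:ℤ)) = ((2*N : ℕ) : ℤ) by push_cast; ring, zpow_natCast, norm_pow]
  exact pow_lt_one₀ (norm_nonneg q) hq1 (by omega)

lemma summable_Ff_plus (q x : ℂ) (hq : q ≠ 0) (hq1 : ‖q‖ < 1) (N : ℕ) (hN : 1 ≤ N) (c : ℤ) :
    Summable fun l : ℕ => Ff q x (c + N * l) := by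
  refine (summable_aux (q ^ (2 * (N:ℤ))) (x ^ 2 * q ^ (2 * c)) (norm_qN_lt q hq1 N hN)).congr
    fun l => ?_
  have h : (2 : ℤ) * (c + N * l) = 2 * c + (2 * N) * l := by ring
  rw [Ff, h, pow_split q hq, mul_assoc]

lemma summable_Finv_minus (q x : ℂ) (hq : q ≠ 0) (hq1 : ‖q‖ < 1) (N : ℕ) (hN : 1 ≤ N) (c : ℤ) :
    Summable fun l : ℕ => Ff q⁻¹ x⁻¹ (c - N * l) := by
  refine (summable_aux (q ^ (2 * (N:ℤ))) ((x⁻¹) ^ 2 * q ^ (-(2 * c))) (norm_qN_lt q hq1 N hN)).congr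
    fun l => ?_
  have h : (2 : ℤ) * (c - N * l) = -(-(2 * c) + (2 * N) * l) := by ring
  rw [Ff, h, inv_zpow, ← zpow_neg, neg_neg, pow_split q hq, mul_assoc]

lemma Ff_inv (q x : ℂ) (hq : q ≠ 0) (hx : x ≠ 0) (k : ℤ)
    (hne : x ^ 2 * q ^ (2 * k) ≠ 1) : Ff q⁻¹ x⁻¹ k = -1 - Ff q x k := by
  have h0 : x ^ 2 * q ^ (2 * k) ≠ 0 := mul_ne_zero (pow_ne_zero 2 hx) (zpow_ne_zero _ hq)
  have h := frac_inv (x ^ 2 * q ^ (2 * k)) h0 hne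
  have e : (x⁻¹) ^ 2 * (q⁻¹) ^ (2 * k) = (x ^ 2 * q ^ (2 * k))⁻¹ := by
    rw [mul_inv, ← inv_pow, inv_zpow]
  rw [Ff, Ff, e, h]

lemma Df_inv (q x : ℂ) (hq : q ≠ 0) (hx : x ≠ 0)
    (hne : ∀ k : ℤ, x ^ 2 * q ^ (2 * k) ≠ 1) (k : ℤ) :
    Df q x k = Ff q⁻¹ x⁻¹ (k + 1) - Ff q⁻¹ x⁻¹ k := by
  rw [Df, Ff_inv q x hq hx (k+1) (hne _), Ff_inv q x hq hx k (hne _)]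
  ring

lemma summable_Df_plus (q x : ℂ) (hq : q ≠ 0) (hq1 : ‖q‖ < 1) (N : ℕ) (hN : 1 ≤ N) (c : ℤ) :
    Summable fun l : ℕ => Df q x (c + N * l) := by
  refine ((summable_Ff_plus q x hq hq1 N hN c).sub
    (summable_Ff_plus q x hq hq1 N hN (c+1))).congr fun l => ?_
  rw [Df, show c + (N:ℤ) * l + 1 = c + 1 + N * l from by ring]

lemma summable_Df_minus (q x : ℂ) (hq : q ≠ 0) (hq1 : ‖q‖ < 1) (hx : x ≠ 0)
    (hne : ∀ k : ℤ, x ^ 2 * q ^ (2 * k) ≠ 1) (N : ℕ) (hN : 1 ≤ N) (c : ℤ) :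
    Summable fun l : ℕ => Df q x (c - N * l) := by
  refine ((summable_Finv_minus q x hq hq1 N hN (c+1)).sub
    (summable_Finv_minus q x hq hq1 N hN c)).congr fun l => ?_
  rw [Df_inv q x hq hx hne, show c - (N:ℤ) * l + 1 = c + 1 - N * l from by ring]

lemma sq_eq (q x : ℂ) (u : ℕ) : (q ^ u * x) ^ 2 = x ^ 2 * q ^ (2 * (u:ℤ)) := by
  rw [mul_pow, ← pow_mul, ← zpow_natCast q (u*2), mul_comm]
  congr 1
  push_cast
  ring

lemma key_exp (q x : ℂ) (hq : q ≠ 0) (u : ℕ) (e : ℤ) :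
    (q ^ u * x) ^ 2 * q ^ e = x ^ 2 * q ^ (2 * (u:ℤ) + e) := by
  rw [sq_eq, mul_assoc, ← zpow_add₀ hq]

lemma key_exp_inv (q x : ℂ) (hq : q ≠ 0) (hx : x ≠ 0) (u : ℕ) (e : ℤ) :
    ((q ^ u * x)⁻¹) ^ 2 * q ^ e = (x ^ 2 * q ^ (2 * (u:ℤ) - e))⁻¹ := by
  have h : x ^ 2 * q ^ (2*(u:ℤ) - e) = (q ^ u * x) ^ 2 * q ^ (-e) := by
    rw [key_exp q x hq u (-e), sub_eq_add_neg]
  rw [inv_pow, h, mul_inv, ← zpow_neg, neg_neg]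

theorem tst : True := trivial

lemma comb_Df (q x : ℂ) (k : ℤ) :
    2 * Ff q x k - Ff q x (k+1) - Ff q x (k-1) = Df q x k - Df q x (k-1) := by
  rw [Df, Df, show k - 1 + 1 = k from by ring]
  ring

lemma gHalf_plus (N : ℕ) (q x : ℂ) (hq : q ≠ 0) (u : ℕ) :
    gHalf N q (q ^ u * x)
      = (∑' l : ℕ, (Df q x ((u:ℤ) + N * l) - Df q x ((u:ℤ) + N * l - 1)))
        + (1/2) * (Df q x ((u:ℤ) - 1) - Df q x u) := by
  rw [gHalf]
  have ht : (∑' l : ℕ, (2 * (q ^ u * x) ^ 2 * q ^ (2 * (N:ℤ) * (l:ℤ)) / (1 - (q ^ u * x) ^ 2 * q ^ (2 * (N:ℤ) * (l:ℤ)))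
      - (q ^ u * x) ^ 2 * q ^ (2 * (N:ℤ) * (l:ℤ) + 2) / (1 - (q ^ u * x) ^ 2 * q ^ (2 * (N:ℤ) * (l:ℤ) + 2))
      - (q ^ u * x) ^ 2 * q ^ (2 * (N:ℤ) * (l:ℤ) - 2) / (1 - (q ^ u * x) ^ 2 * q ^ (2 * (N:ℤ) * (l:ℤ) - 2))))
      = ∑' l : ℕ, (Df q x ((u:ℤ) + N * l) - Df q x ((u:ℤ) + N * l - 1)) := by
    refine tsum_congr fun l => ?_
    have e0 : (q ^ u * x) ^ 2 * q ^ (2 * (N:ℤ) * (l:ℤ)) = x ^ 2 * q ^ (2 * ((u:ℤ) + N * l)) := by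
      rw [key_exp q x hq]; congr 1; ring
    have e1 : (q ^ u * x) ^ 2 * q ^ (2 * (N:ℤ) * (l:ℤ) + 2)
        = x ^ 2 * q ^ (2 * ((u:ℤ) + N * l + 1)) := by
      rw [key_exp q x hq]; congr 1; ring
    have e2 : (q ^ u * x) ^ 2 * q ^ (2 * (N:ℤ) * (l:ℤ) - 2)
        = x ^ 2 * q ^ (2 * ((u:ℤ) + N * l - 1)) := by
      rw [key_exp q x hq]; congr 1; ring
    rw [mul_assoc 2, e0, e1, e2, ← comb_Df]
    simp only [Ff]
    ring
  rw [ht]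
  have hq2 : (q:ℂ) ^ (2:ℕ) = q ^ ((2:ℤ)) := by norm_cast
  have c0 : (q ^ u * x) ^ 2 = x ^ 2 * q ^ (2 * (u:ℤ)) := sq_eq q x u
  have c1 : (q ^ u * x) ^ 2 * q ^ (2:ℕ) = x ^ 2 * q ^ (2 * ((u:ℤ) + 1)) := by
    rw [hq2, key_exp q x hq u 2, show 2 * (u:ℤ) + 2 = 2 * ((u:ℤ) + 1) from by ring]
  have c2 : (q ^ u * x) ^ 2 * q ^ (-2:ℤ) = x ^ 2 * q ^ (2 * ((u:ℤ) - 1)) := by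
    rw [key_exp q x hq u (-2)]; congr 1; ring
  rw [c1, c2, c0]
  simp only [Df, Ff, show (u:ℤ) - 1 + 1 = (u:ℤ) from by ring]
  ring

lemma gHalf_minus (N : ℕ) (q x : ℂ) (hq : q ≠ 0) (hx : x ≠ 0)
    (hne : ∀ k : ℤ, x ^ 2 * q ^ (2 * k) ≠ 1) (u : ℕ) :
    gHalf N q ((q ^ u * x)⁻¹)
      = (∑' l : ℕ, (Df q x ((u:ℤ) - N * l - 1) - Df q x ((u:ℤ) - N * l)))
        - (1/2) * (Df q x ((u:ℤ) - 1) - Df q x u) := by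
  have inv_frac : ∀ m : ℤ, (x^2*q^(2*m))⁻¹ / (1 - (x^2*q^(2*m))⁻¹) = -1 - Ff q x m := fun m => by
    rw [Ff]; exact frac_inv _ (mul_ne_zero (pow_ne_zero _ hx) (zpow_ne_zero _ hq)) (hne m)
  rw [gHalf]
  have ht : (∑' l : ℕ, (2 * ((q ^ u * x)⁻¹) ^ 2 * q ^ (2 * (N:ℤ) * (l:ℤ)) / (1 - ((q ^ u * x)⁻¹) ^ 2 * q ^ (2 * (N:ℤ) * (l:ℤ)))
      - ((q ^ u * x)⁻¹) ^ 2 * q ^ (2 * (N:ℤ) * (l:ℤ) + 2) / (1 - ((q ^ u * x)⁻¹) ^ 2 * q ^ (2 * (N:ℤ) * (l:ℤ) + 2))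
      - ((q ^ u * x)⁻¹) ^ 2 * q ^ (2 * (N:ℤ) * (l:ℤ) - 2) / (1 - ((q ^ u * x)⁻¹) ^ 2 * q ^ (2 * (N:ℤ) * (l:ℤ) - 2))))
      = ∑' l : ℕ, (Df q x ((u:ℤ) - N * l - 1) - Df q x ((u:ℤ) - N * l)) := by
    refine tsum_congr fun l => ?_
    have e0 : ((q ^ u * x)⁻¹) ^ 2 * q ^ (2 * (N:ℤ) * (l:ℤ))
        = (x ^ 2 * q ^ (2 * ((u:ℤ) - N * l)))⁻¹ := by
      rw [key_exp_inv q x hq hx u (2 * (N:ℤ) * (l:ℤ)),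
        show 2 * (u:ℤ) - 2 * (N:ℤ) * (l:ℤ) = 2 * ((u:ℤ) - N * l) from by ring]
    have e1 : ((q ^ u * x)⁻¹) ^ 2 * q ^ (2 * (N:ℤ) * (l:ℤ) + 2)
        = (x ^ 2 * q ^ (2 * ((u:ℤ) - N * l - 1)))⁻¹ := by
      rw [key_exp_inv q x hq hx u (2 * (N:ℤ) * (l:ℤ) + 2),
        show 2 * (u:ℤ) - (2 * (N:ℤ) * (l:ℤ) + 2) = 2 * ((u:ℤ) - N * l - 1) from by ring]
    have e2 : ((q ^ u * x)⁻¹) ^ 2 * q ^ (2 * (N:ℤ) * (l:ℤ) - 2)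
        = (x ^ 2 * q ^ (2 * ((u:ℤ) - N * l + 1)))⁻¹ := by
      rw [key_exp_inv q x hq hx u (2 * (N:ℤ) * (l:ℤ) - 2),
        show 2 * (u:ℤ) - (2 * (N:ℤ) * (l:ℤ) - 2) = 2 * ((u:ℤ) - N * l + 1) from by ring]
    rw [mul_assoc 2, mul_div_assoc, e0, e1, e2, inv_frac, inv_frac, inv_frac]
    rw [Df, Df, show (u:ℤ) - N * l - 1 + 1 = (u:ℤ) - N * l from by ring]
    ring
  rw [ht]
  have hq2 : (q:ℂ) ^ (2:ℕ) = q ^ ((2:ℤ)) := by norm_cast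
  have c0 : ((q ^ u * x)⁻¹) ^ 2 = (x ^ 2 * q ^ (2 * (u:ℤ)))⁻¹ := by
    rw [inv_pow, sq_eq]
  have c1 : ((q ^ u * x)⁻¹) ^ 2 * q ^ (2:ℕ) = (x ^ 2 * q ^ (2 * ((u:ℤ) - 1)))⁻¹ := by
    rw [hq2, key_exp_inv q x hq hx u 2,
      show 2 * (u:ℤ) - 2 = 2 * ((u:ℤ) - 1) from by ring]
  have c2 : ((q ^ u * x)⁻¹) ^ 2 * q ^ (-2:ℤ) = (x ^ 2 * q ^ (2 * ((u:ℤ) + 1)))⁻¹ := by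
    rw [key_exp_inv q x hq hx u (-2),
      show 2 * (u:ℤ) - (-2) = 2 * ((u:ℤ) + 1) from by ring]
  rw [c1, c2, c0, inv_frac, inv_frac, inv_frac]
  rw [Df, Df, show (u:ℤ) - 1 + 1 = (u:ℤ) from by ring]
  ring

lemma tele (g : ℤ → ℂ) (N : ℕ) :
    ∑ u ∈ Finset.Icc 1 N, (g u - g ((u:ℤ) - 1)) = g N - g 0 := by
  induction N with
  | zero => simp
  | succ n ih =>
    rw [Finset.sum_Icc_succ_top (by omega : 1 ≤ n + 1), ih]
    push_cast
    ring

lemma key (N : ℕ) (hN : 1 ≤ N) (q x : ℂ) (hq : q ≠ 0) (hq1 : ‖q‖ < 1) (hx : x ≠ 0)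
    (hne : ∀ k : ℤ, x ^ 2 * q ^ (2 * k) ≠ 1) :
    ∑ u ∈ Finset.Icc 1 N, (gHalf N q (q ^ u * x) - gHalf N q ((q ^ u * x))⁻¹) = 0 := by
  have SDp : ∀ c : ℤ, Summable fun l : ℕ => Df q x (c + N * l) :=
    summable_Df_plus q x hq hq1 N hN
  have SDm : ∀ c : ℤ, Summable fun l : ℕ => Df q x (c - N * l) :=
    summable_Df_minus q x hq hq1 hx hne N hN
  -- summability of the two series per u
  have hA : ∀ c : ℤ, Summable (fun l : ℕ => Df q x (c + N * l) - Df q x (c + N * l - 1)) :=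
    fun c => ((SDp c).sub ((SDp (c - 1)).congr fun l => by
      rw [show (c - 1) + (N:ℤ) * l = c + N * l - 1 from by ring]))
  have hB : ∀ c : ℤ, Summable (fun l : ℕ => Df q x (c - N * l - 1) - Df q x (c - N * l)) :=
    fun c => (((SDm (c - 1)).congr fun l => by
      rw [show (c - 1) - (N:ℤ) * l = c - N * l - 1 from by ring]).sub (SDm c))
  have step1 : ∀ u : ℕ, gHalf N q (q ^ u * x) - gHalf N q ((q ^ u * x))⁻¹
      = (∑' l : ℕ, ((Df q x ((u:ℤ) + N * l) - Df q x ((u:ℤ) + N * l - 1))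
          + (Df q x ((u:ℤ) - N * l) - Df q x ((u:ℤ) - N * l - 1))))
        + (Df q x ((u:ℤ) - 1) - Df q x u) := by
    intro u
    rw [gHalf_plus N q x hq u, gHalf_minus N q x hq hx hne u]
    rw [Summable.tsum_add (hA u) (((SDm u).sub ((SDm ((u:ℤ) - 1)).congr fun l => by
      rw [show ((u:ℤ) - 1) - (N:ℤ) * l = (u:ℤ) - N * l - 1 from by ring])))]
    have hTC : (∑' l : ℕ, (Df q x ((u:ℤ) - N * l) - Df q x ((u:ℤ) - N * l - 1)))
        = -(∑' l : ℕ, (Df q x ((u:ℤ) - N * l - 1) - Df q x ((u:ℤ) - N * l))) := by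
      rw [← tsum_neg]
      exact tsum_congr fun l => by ring
    rw [hTC]
    ring
  rw [Finset.sum_congr rfl fun u _ => step1 u, Finset.sum_add_distrib]
  -- second sum telescopes
  have tele2 : ∑ u ∈ Finset.Icc 1 N, (Df q x ((u:ℤ) - 1) - Df q x u)
      = Df q x 0 - Df q x N := by
    have := tele (fun k => -Df q x k) N
    calc ∑ u ∈ Finset.Icc 1 N, (Df q x ((u:ℤ) - 1) - Df q x u)
        = ∑ u ∈ Finset.Icc 1 N, ((fun k : ℤ => -Df q x k) u - (fun k : ℤ => -Df q x k) ((u:ℤ) - 1)) := by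
          refine Finset.sum_congr rfl fun u _ => by ring
      _ = -Df q x N - -Df q x 0 := tele (fun k => -Df q x k) N
      _ = Df q x 0 - Df q x N := by ring
  rw [tele2]
  -- first sum: swap with tsum and telescope in u, for each l
  have hsum : ∀ u : ℕ, u ∈ Finset.Icc 1 N → Summable (fun l : ℕ =>
      (Df q x ((u:ℤ) + N * l) - Df q x ((u:ℤ) + N * l - 1))
        + (Df q x ((u:ℤ) - N * l) - Df q x ((u:ℤ) - N * l - 1))) :=
    fun u _ => (hA u).add ((hB u).neg.congr fun l => by ring)
  rw [← Summable.tsum_finsetSum hsum]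
  have inner : ∀ l : ℕ, ∑ u ∈ Finset.Icc 1 N,
      ((Df q x ((u:ℤ) + N * l) - Df q x ((u:ℤ) + N * l - 1))
        + (Df q x ((u:ℤ) - N * l) - Df q x ((u:ℤ) - N * l - 1)))
      = (Df q x ((N:ℤ) + N * l) + Df q x ((N:ℤ) - N * l))
        - (Df q x ((N:ℤ) * l) + Df q x (-((N:ℤ) * l))) := by
    intro l
    have := tele (fun k => Df q x (k + N * l) + Df q x (k - N * l)) N
    calc ∑ u ∈ Finset.Icc 1 N,
        ((Df q x ((u:ℤ) + N * l) - Df q x ((u:ℤ) + N * l - 1))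
          + (Df q x ((u:ℤ) - N * l) - Df q x ((u:ℤ) - N * l - 1)))
        = ∑ u ∈ Finset.Icc 1 N,
          ((Df q x ((u:ℤ) + N * l) + Df q x ((u:ℤ) - N * l))
            - (Df q x (((u:ℤ) - 1) + N * l) + Df q x (((u:ℤ) - 1) - N * l))) := by
          refine Finset.sum_congr rfl fun u _ => ?_
          rw [show ((u:ℤ) - 1) + (N:ℤ) * l = (u:ℤ) + N * l - 1 from by ring,
            show ((u:ℤ) - 1) - (N:ℤ) * l = (u:ℤ) - N * l - 1 from by ring]
          ring
      _ = (Df q x ((N:ℤ) + N * l) + Df q x ((N:ℤ) - N * l))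
          - (Df q x (0 + (N:ℤ) * l) + Df q x (0 - (N:ℤ) * l)) := this
      _ = (Df q x ((N:ℤ) + N * l) + Df q x ((N:ℤ) - N * l))
          - (Df q x ((N:ℤ) * l) + Df q x (-((N:ℤ) * l))) := by rw [zero_add, zero_sub]
  rw [tsum_congr inner]
  have S1 : Summable fun l : ℕ => Df q x ((N:ℤ) * l) :=
    (SDp 0).congr fun l => by rw [zero_add]
  have S2 : Summable fun l : ℕ => Df q x (-((N:ℤ) * l)) :=
    (SDm 0).congr fun l => by rw [zero_sub]
  have hsplit : (∑' l : ℕ, ((Df q x ((N:ℤ) + N * l) + Df q x ((N:ℤ) - N * l))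
        - (Df q x ((N:ℤ) * l) + Df q x (-((N:ℤ) * l)))))
      = (∑' l : ℕ, Df q x ((N:ℤ) + N * l)) + (∑' l : ℕ, Df q x ((N:ℤ) - N * l))
        - ((∑' l : ℕ, Df q x ((N:ℤ) * l)) + (∑' l : ℕ, Df q x (-((N:ℤ) * l)))) := by
    rw [Summable.tsum_sub ((SDp N).add (SDm N)) (S1.add S2),
      Summable.tsum_add (SDp N) (SDm N), Summable.tsum_add S1 S2]
  rw [hsplit]
  -- shifts
  have shift1 : (∑' l : ℕ, Df q x ((N:ℤ) * l))
      = Df q x 0 + ∑' l : ℕ, Df q x ((N:ℤ) + N * l) := by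
    rw [Summable.tsum_eq_zero_add S1]
    push_cast
    rw [mul_zero]
    exact congrArg (Df q x 0 + ·) (tsum_congr fun b => by
      rw [show (N:ℤ) * ((b:ℤ) + 1) = (N:ℤ) + N * b from by ring])
  have shift2 : (∑' l : ℕ, Df q x ((N:ℤ) - N * l))
      = Df q x N + ∑' l : ℕ, Df q x (-((N:ℤ) * l)) := by
    rw [Summable.tsum_eq_zero_add (SDm N)]
    push_cast
    rw [mul_zero, sub_zero]
    exact congrArg (Df q x (N:ℤ) + ·) (tsum_congr fun b => by
      rw [show (N:ℤ) - (N:ℤ) * ((b:ℤ) + 1) = -((N:ℤ) * b) from by ring])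
  rw [shift1, shift2]
  ring

/-- The structure function `f(x)` of the Poisson bracket on the center of the elliptic algebra
`A_{q,p}(sl(N)_c)` at the critical level `c = −N`. -/
noncomputable def fStruct (N : ℕ) (q lq x : ℂ) : ℂ :=
  -2 * lq * (gHalf N q x - gHalf N q x⁻¹)

/-- The identity `∑_{u=1}^{N} f(q^u x) = 0`, expressing that the product of `N` shifted copies
of the generating function `t(z)` Poisson-commutes with all the generators. -/
theorem stmt14 (N : ℕ) (hN : 1 ≤ N) (q lq : ℂ)
    (hq0 : 0 < ‖q‖) (hq1 : ‖q‖ < 1)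
    (hlq : Complex.exp lq = q) (x : ℂ)
    (hdef : ∀ u ∈ Finset.Icc 1 N, ∀ m : ℤ,
      (q ^ u * x) ^ 2 ≠ q ^ (2 * (N : ℤ) * m)
      ∧ (q ^ u * x) ^ 2 ≠ q ^ (2 * (N : ℤ) * m + 2)
      ∧ (q ^ u * x) ^ 2 ≠ q ^ (2 * (N : ℤ) * m - 2)) :
    ∑ u ∈ Finset.Icc 1 N, fStruct N q lq (q ^ u * x) = 0 := by
  have hq : q ≠ 0 := by
    intro h
    rw [h] at hq0
    simp at hq0
  by_cases hx : x = 0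
  · subst hx
    refine Finset.sum_eq_zero fun u _ => ?_
    simp [fStruct, gHalf]
  · -- derive the nonvanishing hypothesis
    have hne : ∀ k : ℤ, x ^ 2 * q ^ (2 * k) ≠ 1 := by
      intro k hk
      have hNpos : (0:ℤ) < N := by exact_mod_cast hN
      set r : ℤ := (k - 1) % N with hr
      have hr0 : 0 ≤ r := Int.emod_nonneg _ (by omega)
      have hrN : r < N := Int.emod_lt_of_pos _ hNpos
      set u : ℕ := (r + 1).toNat with hu_def
      have hu : (u:ℤ) = r + 1 := Int.toNat_of_nonneg (by omega)
      have hu_mem : u ∈ Finset.Icc 1 N := by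
        rw [Finset.mem_Icc]
        omega
      have hdiv : (N:ℤ) * ((k - 1) / N) = k - 1 - r := by
        have := Int.mul_ediv_add_emod (k - 1) N
        omega
      set m : ℤ := -((k - 1) / N) with hm
      have hNm : (N:ℤ) * m = (u:ℤ) - k := by
        rw [hm, mul_neg, hdiv, hu]
        ring
      apply (hdef u hu_mem m).1
      rw [sq_eq q x u]
      have e1 : (2 : ℤ) * (u:ℤ) = 2 * k + (2 * (N:ℤ) * m) := by
        rw [show (2:ℤ) * (N:ℤ) * m = 2 * ((N:ℤ) * m) from by ring, hNm]
        ring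
      rw [e1, zpow_add₀ hq, ← mul_assoc, hk, one_mul]
    have hq1' : ‖q‖ < 1 := by exact hq1
    have hzero := key N hN q x hq hq1' hx hne
    calc ∑ u ∈ Finset.Icc 1 N, fStruct N q lq (q ^ u * x)
        = ∑ u ∈ Finset.Icc 1 N,
            (-2 * lq * (gHalf N q (q ^ u * x) - gHalf N q ((q ^ u * x))⁻¹)) :=
          Finset.sum_congr rfl fun u _ => rfl
      _ = -2 * lq * ∑ u ∈ Finset.Icc 1 N,
            (gHalf N q (q ^ u * x) - gHalf N q ((q ^ u * x))⁻¹) := by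
          rw [Finset.mul_sum]
      _ = 0 := by rw [hzero, mul_zero]
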